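/- Let (X, d_X, μ_X) be a complete separable metric space which is geometrically doubling (there is λ ∈ ℕ such that every ball B(x, r) can be covered by at most λ balls of radius r/2), equipped with a Borel regular measure μ_X that is finite on every ball, and let (Y, d_Y, μ_Y) be a separable metric space equipped with a measure μ_Y. If f : X → Y is a μ_X-measurable mapping and A ⊆ X is a Borel set, then there exists a mapping g : X → Y with g = f μ_X-almost everywhere on X such that the Banach indicatrix y ↦ N(y, g, A) is a μ_Y-measurable function (measurable with respect to the completion of μ_Y). -/

import Mathlib

open MeasureTheory

/-- A metric space is geometrically doubling if there is `n : ℕ` such that every ball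
`B(x, r)` can be covered by at most `n` balls of radius `r / 2`. -/
def GeometricallyDoubling (X : Type*) [PseudoMetricSpace X] : Prop :=
  ∃ n : ℕ, ∀ (x : X) (r : ℝ), ∃ s : Finset X,
    s.card ≤ n ∧ Metric.ball x r ⊆ ⋃ c ∈ s, Metric.ball c (r / 2)

/-- A mapping `f : X → Y` is `μ`-measurable if the preimage of every open set is
measurable for the completion of `μ` (i.e. null measurable). -/
def MuMeasurableMap {X Y : Type*} [MeasurableSpace X] [TopologicalSpace Y]
    (μ : Measure X) (f : X → Y) : Prop :=
  ∀ E : Set Y, IsOpen E → NullMeasurableSet (f ⁻¹' E) μ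

/-- The Banach indicatrix (multiplicity function): the extended-natural-number
cardinality of `{x ∈ A | f x = y}`. -/
noncomputable def banachIndicatrix {X Y : Type*} (f : X → Y) (A : Set X) (y : Y) : ℕ∞ :=
  (A ∩ f ⁻¹' {y}).encard

section Aux

open Set
open scoped ENNReal NNReal

set_option linter.unusedSectionVars false

variable {X : Type*} [MetricSpace X] [CompleteSpace X] [TopologicalSpace.SeparableSpace X]
  [MeasurableSpace X] [BorelSpace X]

/-- Ulam tightness: a finite Borel measure on a complete separable metric space is tight. -/
lemma aux_exists_compact_compl_le (μ : Measure X) [IsFiniteMeasure μ] {ε : ℝ≥0∞} (hε : ε ≠ 0) :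
    ∃ K : Set X, IsCompact K ∧ μ Kᶜ ≤ ε := by
  rcases isEmpty_or_nonempty X with hX | hX
  · exact ⟨∅, isCompact_empty, by simp [Set.eq_empty_of_isEmpty (∅ᶜ : Set X)]⟩
  obtain ⟨u, hu⟩ := TopologicalSpace.exists_dense_seq X
  have hcov : ∀ n : ℕ, (⋃ m : ℕ, Metric.closedBall (u m) (1 / (n + 1))) = univ := by
    intro n
    apply eq_univ_of_forall
    intro x
    obtain ⟨m, hm⟩ := hu.exists_dist_lt x (by positivity : (0:ℝ) < 1 / (n+1))
    exact mem_iUnion.2 ⟨m, by simpa [Metric.mem_closedBall, dist_comm] using hm.le⟩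
  have key : ∀ n : ℕ, ∃ M : ℕ,
      μ (⋃ m ∈ Finset.Iic M, Metric.closedBall (u m) (1 / (n + 1)))ᶜ ≤ ε / 2 ^ (n + 1) := by
    intro n
    set s : ℕ → Set X := fun M => ⋃ m ∈ Finset.Iic M, Metric.closedBall (u m) (1 / (n + 1)) with hs
    have hmono : Monotone s := by
      intro a b hab
      apply Set.biUnion_subset_biUnion_left
      intro m hm
      exact Finset.mem_Iic.2 (le_trans (Finset.mem_Iic.1 hm) hab)
    have hunion : (⋃ M, s M) = univ := by
      rw [← hcov n]
      apply subset_antisymm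
      · exact iUnion_subset fun M => iUnion₂_subset fun m _ =>
          subset_iUnion (fun m => Metric.closedBall (u m) (1 / (n + 1))) m
      · refine iUnion_subset fun m => subset_iUnion_of_subset m ?_
        exact subset_biUnion_of_mem (u := fun m => Metric.closedBall (u m) (1 / (n+1)))
          (Finset.mem_Iic.2 (le_refl m))
    have htend := tendsto_measure_iUnion_atTop (μ := μ) hmono
    rw [hunion] at htend
    have hlt : μ univ < μ univ + ε / 2 ^ (n + 1) :=
      ENNReal.lt_add_right (measure_ne_top μ _) (by simp [hε])
    have hmeas : ∀ M, MeasurableSet (s M) := fun M =>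
      (Finset.Iic M).measurableSet_biUnion fun m _ => measurableSet_closedBall
    have : ∀ᶠ M in Filter.atTop, μ univ < μ (s M) + ε / 2 ^ (n + 1) := by
      have : Filter.Tendsto (fun M => μ (s M) + ε / 2 ^ (n + 1)) Filter.atTop
          (nhds (μ univ + ε / 2 ^ (n + 1))) := htend.add_const _
      exact this.eventually_const_lt hlt
    obtain ⟨M, hM⟩ := this.exists
    refine ⟨M, ?_⟩
    have := measure_diff_lt_of_lt_add ((hmeas M).nullMeasurableSet)
      (subset_univ _) (measure_ne_top μ _) hM
    rw [← Set.compl_eq_univ_diff] at this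
    exact this.le
  choose M hM using key
  refine ⟨⋂ n, ⋃ m ∈ Finset.Iic (M n), Metric.closedBall (u m) (1 / (n + 1)), ?_, ?_⟩
  · apply TotallyBounded.isCompact_of_isClosed
    · rw [Metric.totallyBounded_iff]
      intro δ hδ
      obtain ⟨n, hn⟩ := exists_nat_one_div_lt hδ
      refine ⟨u '' (Finset.Iic (M n) : Set ℕ), (Finset.Iic (M n) : Set ℕ).toFinite.image u, ?_⟩
      intro x hx
      have hx' := mem_iInter.1 hx n
      obtain ⟨m, hm, hxm⟩ := mem_iUnion₂.1 hx'
      refine mem_iUnion₂.2 ⟨u m, mem_image_of_mem u hm, ?_⟩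
      exact Metric.mem_ball.2 (lt_of_le_of_lt (Metric.mem_closedBall.1 hxm) hn)
    · exact isClosed_iInter fun n => (Finset.Iic (M n) : Finset ℕ).finite_toSet.isClosed_biUnion fun m _ => Metric.isClosed_closedBall
  · rw [Set.compl_iInter]
    refine le_trans (measure_iUnion_le _) ?_
    calc ∑' n, μ (⋃ m ∈ Finset.Iic (M n), Metric.closedBall (u m) (1 / (n + 1)))ᶜ
        ≤ ∑' n, ε / 2 ^ (n + 1) := ENNReal.tsum_le_tsum hM
      _ ≤ ε := by
          have : ∀ n : ℕ, ε / 2 ^ (n + 1) = ε * (2 : ℝ≥0∞)⁻¹ ^ (n + 1) := by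
            intro n
            rw [div_eq_mul_inv, ENNReal.inv_pow]
          simp_rw [this]
          rw [ENNReal.tsum_mul_left, ENNReal.tsum_geometric_add_one, ENNReal.one_sub_inv_two,
            inv_inv, ENNReal.inv_mul_cancel (by norm_num) (by norm_num), mul_one]

/-- Inner regularity by compact sets for finite Borel measures on Polish-like spaces. -/
lemma aux_exists_compact_diff_le (μ : Measure X) [IsFiniteMeasure μ] {S : Set X}
    (hS : MeasurableSet S) {ε : ℝ≥0∞} (hε : ε ≠ 0) :
    ∃ K : Set X, K ⊆ S ∧ IsCompact K ∧ μ (S \ K) ≤ ε := by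
  have hε2 : ε / 2 ≠ 0 := by simp [hε]
  obtain ⟨F, hFS, hFcl, hF⟩ := hS.exists_isClosed_diff_lt (measure_ne_top μ S)
    (ε := ε / 2) hε2
  obtain ⟨K₀, hK₀c, hK₀⟩ := aux_exists_compact_compl_le μ hε2
  refine ⟨F ∩ K₀, inter_subset_left.trans hFS, hK₀c.inter_left hFcl, ?_⟩
  have : S \ (F ∩ K₀) ⊆ (S \ F) ∪ K₀ᶜ := by
    intro x hx
    rcases hx with ⟨hxS, hx⟩
    by_cases hxF : x ∈ F
    · exact Or.inr fun hK => hx ⟨hxF, hK⟩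
    · exact Or.inl ⟨hxS, hxF⟩
  refine le_trans (measure_mono this) (le_trans (measure_union_le _ _) ?_)
  calc μ (S \ F) + μ K₀ᶜ ≤ ε / 2 + ε / 2 := add_le_add hF.le hK₀
    _ = ε := ENNReal.add_halves ε

variable {Y : Type*} [MetricSpace Y] [TopologicalSpace.SeparableSpace Y]
  [MeasurableSpace Y] [BorelSpace Y]

private lemma aux_tsum_half (ε : ℝ≥0∞) : ∑' n : ℕ, ε * (2 : ℝ≥0∞)⁻¹ ^ (n + 1) = ε := by
  rw [ENNReal.tsum_mul_left, ENNReal.tsum_geometric_add_one, ENNReal.one_sub_inv_two,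
    inv_inv, ENNReal.inv_mul_cancel (by norm_num) (by norm_num), mul_one]

private lemma aux_halves (a : ℝ≥0∞) (n : ℕ) :
    a * (2:ℝ≥0∞)⁻¹ ^ (n + 2) + a * (2:ℝ≥0∞)⁻¹ ^ (n + 2) = a * (2:ℝ≥0∞)⁻¹ ^ (n + 1) := by
  have h : a * (2:ℝ≥0∞)⁻¹ ^ (n + 2) = a * (2:ℝ≥0∞)⁻¹ ^ (n + 1) / 2 := by
    rw [pow_succ, ← mul_assoc, div_eq_mul_inv]
  rw [h, ENNReal.add_halves]

/-- Lusin's theorem on a complete separable metric space, for finite Borel measures. -/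
lemma aux_lusin (μ : Measure X) [IsFiniteMeasure μ] {f : X → Y} (hf : Measurable f)
    {S : Set X} (hS : MeasurableSet S) {ε : ℝ≥0∞} (hε : ε ≠ 0) :
    ∃ K : Set X, K ⊆ S ∧ IsCompact K ∧ ContinuousOn f K ∧ μ (S \ K) ≤ ε := by
  rcases isEmpty_or_nonempty X with hX | hX
  · refine ⟨∅, empty_subset _, isCompact_empty, continuousOn_empty f, ?_⟩
    simp [Set.eq_empty_of_isEmpty (S \ ∅)]
  haveI : Nonempty Y := ⟨f (Classical.arbitrary X)⟩
  obtain ⟨v, hv⟩ := TopologicalSpace.exists_dense_seq Y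
  set r : ℕ → ℝ := fun n => 1 / (n + 1) with hr
  have hrpos : ∀ n, 0 < r n := fun n => by positivity
  set B : ℕ → ℕ → Set Y := fun n m =>
    Metric.ball (v m) (r n) \ ⋃ (j : ℕ) (_ : j < m), Metric.ball (v j) (r n) with hB
  have hBmeas : ∀ n m, MeasurableSet (B n m) := fun n m =>
    measurableSet_ball.diff
      (MeasurableSet.iUnion fun j => MeasurableSet.iUnion fun _ => measurableSet_ball)
  have hBdisj : ∀ n, ∀ m m' : ℕ, m ≠ m' → Disjoint (B n m) (B n m') := by
    intro n m m' hne
    wlog h : m < m' generalizing m m'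
    · exact (this m' m hne.symm (by omega)).symm
    refine Set.disjoint_left.2 fun y hy hy' => ?_
    exact hy'.2 (mem_iUnion.2 ⟨m, mem_iUnion.2 ⟨h, hy.1⟩⟩)
  have hBcov : ∀ n (y : Y), ∃ m, y ∈ B n m := by
    intro n y
    classical
    have hex : ∃ m, y ∈ Metric.ball (v m) (r n) := by
      obtain ⟨m, hm⟩ := hv.exists_dist_lt y (hrpos n)
      exact ⟨m, by simpa [Metric.mem_ball, dist_comm] using hm⟩
    refine ⟨Nat.find hex, Nat.find_spec hex, ?_⟩
    intro hmem
    obtain ⟨j, hj⟩ := mem_iUnion.1 hmem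
    obtain ⟨hjlt, hjy⟩ := mem_iUnion.1 hj
    exact Nat.find_min hex hjlt hjy
  have hBdiam : ∀ n m, ∀ y ∈ B n m, ∀ y' ∈ B n m, dist y y' < 2 * r n := by
    intro n m y hy y' hy'
    calc dist y y' ≤ dist y (v m) + dist (v m) y' := dist_triangle _ _ _
      _ < r n + r n := by
          refine add_lt_add (Metric.mem_ball.1 hy.1) ?_
          rw [dist_comm]; exact Metric.mem_ball.1 hy'.1
      _ = 2 * r n := by ring
  set Sc : ℕ → ℕ → Set X := fun n m => S ∩ f ⁻¹' (B n m) with hSc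
  have hScmeas : ∀ n m, MeasurableSet (Sc n m) := fun n m => hS.inter (hf (hBmeas n m))
  have hScS : ∀ n m, Sc n m ⊆ S := fun n m => inter_subset_left
  -- choose compacts inside the pieces
  have hpos : ∀ n m : ℕ, (ε * (2:ℝ≥0∞)⁻¹ ^ (n + 2) * (2:ℝ≥0∞)⁻¹ ^ (m + 1)) ≠ 0 := by
    intro n m
    simp [hε, pow_eq_zero_iff]
  have hC : ∀ n m : ℕ, ∃ C : Set X, C ⊆ Sc n m ∧ IsCompact C ∧
      μ (Sc n m \ C) ≤ ε * (2:ℝ≥0∞)⁻¹ ^ (n + 2) * (2:ℝ≥0∞)⁻¹ ^ (m + 1) :=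
    fun n m => aux_exists_compact_diff_le μ (hScmeas n m) (hpos n m)
  choose C hCsub hCcomp hCμ using hC
  -- choose finite cutoffs
  have hM : ∀ n : ℕ, ∃ M : ℕ,
      μ (S \ ⋃ m ∈ Finset.Iic M, Sc n m) ≤ ε * (2:ℝ≥0∞)⁻¹ ^ (n + 2) := by
    intro n
    set s : ℕ → Set X := fun M => ⋃ m ∈ Finset.Iic M, Sc n m with hs
    have hmono : Monotone s := by
      intro a b hab
      apply Set.biUnion_subset_biUnion_left
      intro m hm
      exact Finset.mem_Iic.2 (le_trans (Finset.mem_Iic.1 hm) hab)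
    have hsmeas : ∀ M, MeasurableSet (s M) := fun M =>
      (Finset.Iic M).measurableSet_biUnion fun m _ => hScmeas n m
    have hsS : ∀ M, s M ⊆ S := fun M => iUnion₂_subset fun m _ => hScS n m
    have hunion : (⋃ M, s M) = S := by
      apply subset_antisymm
      · exact iUnion_subset hsS
      · intro x hx
        obtain ⟨m, hm⟩ := hBcov n (f x)
        exact mem_iUnion.2 ⟨m, mem_iUnion₂.2 ⟨m, Finset.mem_Iic.2 le_rfl, ⟨hx, hm⟩⟩⟩
    have htend := tendsto_measure_iUnion_atTop (μ := μ) hmono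
    rw [hunion] at htend
    have hδ : (ε * (2:ℝ≥0∞)⁻¹ ^ (n + 2)) ≠ 0 := by simp [hε, pow_eq_zero_iff]
    have hlt : μ S < μ S + ε * (2:ℝ≥0∞)⁻¹ ^ (n + 2) :=
      ENNReal.lt_add_right (measure_ne_top μ _) hδ
    have hev : ∀ᶠ M in Filter.atTop, μ S < μ (s M) + ε * (2:ℝ≥0∞)⁻¹ ^ (n + 2) :=
      (htend.add_const _).eventually_const_lt hlt
    obtain ⟨M, hMlt⟩ := hev.exists
    exact ⟨M, (measure_diff_lt_of_lt_add ((hsmeas M).nullMeasurableSet) (hsS M)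
      (measure_ne_top μ _) hMlt).le⟩
  choose M hMμ using hM
  set E : ℕ → Set X := fun n => ⋃ m ∈ Finset.Iic (M n), C n m with hE
  have hEcomp : ∀ n, IsCompact (E n) := fun n =>
    (Finset.Iic (M n)).finite_toSet.isCompact_biUnion fun m _ => hCcomp n m
  have hES : ∀ n, E n ⊆ S := fun n =>
    iUnion₂_subset fun m _ => (hCsub n m).trans (hScS n m)
  refine ⟨⋂ n, E n, (iInter_subset _ 0).trans (hES 0), ?_, ?_, ?_⟩
  · exact (hEcomp 0).of_isClosed_subset
      (isClosed_iInter fun n => (hEcomp n).isClosed) (iInter_subset _ 0)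
  · -- continuity
    rw [Metric.continuousOn_iff]
    intro x hx ε' hε'
    obtain ⟨n, hn⟩ := exists_nat_one_div_lt (half_pos hε')
    have h2rn : 2 * r n < ε' := by
      have : r n < ε' / 2 := hn
      linarith
    obtain ⟨m₀, hm₀le, hxm₀⟩ := mem_iUnion₂.1 (mem_iInter.1 hx n)
    set W : Set X := ⋃ m ∈ Finset.Iic (M n) \ {m₀}, C n m with hW
    have hWclosed : IsClosed W :=
      (Finset.Iic (M n) \ {m₀}).finite_toSet.isClosed_biUnion
        fun m _ => (hCcomp n m).isClosed
    have hxW : x ∉ W := by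
      intro hxWmem
      obtain ⟨m, hm, hxm⟩ := mem_iUnion₂.1 hxWmem
      have hmne : m ≠ m₀ := by
        intro h; rw [h] at hm; simp at hm
      have h1 : f x ∈ B n m := (hCsub n m hxm).2
      have h2 : f x ∈ B n m₀ := (hCsub n m₀ hxm₀).2
      exact Set.disjoint_left.1 (hBdisj n m m₀ hmne) h1 h2
    obtain ⟨δ, hδpos, hδball⟩ := Metric.isOpen_iff.1 hWclosed.isOpen_compl x hxW
    refine ⟨δ, hδpos, fun x' hx' hdist => ?_⟩
    obtain ⟨m, hmle, hx'm⟩ := mem_iUnion₂.1 (mem_iInter.1 hx' n)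
    have hmeq : m = m₀ := by
      by_contra hne
      have : x' ∈ W := mem_iUnion₂.2 ⟨m, by simp [Finset.mem_Iic.1 hmle, hne], hx'm⟩
      exact hδball (Metric.mem_ball.2 hdist) this
    subst hmeq
    exact lt_trans (hBdiam n m (f x') (hCsub n m hx'm).2 (f x) (hCsub n m hxm₀).2) h2rn
  · -- measure bound
    have hdecomp : S \ ⋂ n, E n ⊆ ⋃ n, (S \ E n) := by
      intro x ⟨hxS, hxK⟩
      rw [mem_iInter] at hxK
      push_neg at hxK
      obtain ⟨n, hn⟩ := hxK
      exact mem_iUnion.2 ⟨n, hxS, hn⟩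
    refine le_trans (measure_mono hdecomp) (le_trans (measure_iUnion_le _) ?_)
    have hEn : ∀ n, μ (S \ E n) ≤ ε * (2:ℝ≥0∞)⁻¹ ^ (n + 1) := by
      intro n
      have hsub : S \ E n ⊆ (S \ ⋃ m ∈ Finset.Iic (M n), Sc n m) ∪
          ⋃ m ∈ Finset.Iic (M n), (Sc n m \ C n m) := by
        intro x ⟨hxS, hxE⟩
        by_cases hxU : x ∈ ⋃ m ∈ Finset.Iic (M n), Sc n m
        · obtain ⟨m, hm, hxm⟩ := mem_iUnion₂.1 hxU
          refine Or.inr (mem_iUnion₂.2 ⟨m, hm, hxm, fun hC => ?_⟩)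
          exact hxE (mem_iUnion₂.2 ⟨m, hm, hC⟩)
        · exact Or.inl ⟨hxS, hxU⟩
      refine le_trans (measure_mono hsub) (le_trans (measure_union_le _ _) ?_)
      have hsum : μ (⋃ m ∈ Finset.Iic (M n), (Sc n m \ C n m)) ≤
          ε * (2:ℝ≥0∞)⁻¹ ^ (n + 2) := by
        refine le_trans (measure_biUnion_finset_le _ _) ?_
        calc ∑ m ∈ Finset.Iic (M n), μ (Sc n m \ C n m)
            ≤ ∑ m ∈ Finset.Iic (M n), ε * (2:ℝ≥0∞)⁻¹ ^ (n + 2) * (2:ℝ≥0∞)⁻¹ ^ (m + 1) :=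
              Finset.sum_le_sum fun m _ => hCμ n m
          _ ≤ ∑' m : ℕ, ε * (2:ℝ≥0∞)⁻¹ ^ (n + 2) * (2:ℝ≥0∞)⁻¹ ^ (m + 1) :=
              ENNReal.sum_le_tsum _
          _ = ε * (2:ℝ≥0∞)⁻¹ ^ (n + 2) := aux_tsum_half _
      calc μ (S \ ⋃ m ∈ Finset.Iic (M n), Sc n m) +
            μ (⋃ m ∈ Finset.Iic (M n), (Sc n m \ C n m))
          ≤ ε * (2:ℝ≥0∞)⁻¹ ^ (n + 2) + ε * (2:ℝ≥0∞)⁻¹ ^ (n + 2) := add_le_add (hMμ n) hsum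
        _ = ε * (2:ℝ≥0∞)⁻¹ ^ (n + 1) := aux_halves ε n
    exact le_trans (ENNReal.tsum_le_tsum hEn) (aux_tsum_half ε).le

/-- The multiplicity function of a map over a countable union of compacta on which it is
continuous is Borel measurable. -/
lemma aux_encard_measurable (K : ℕ → Set X) (hKc : ∀ j, IsCompact (K j))
    (f : X → Y) (hfc : ∀ j, ContinuousOn f (K j)) :
    Measurable fun y : Y => ((⋃ j, K j) ∩ f ⁻¹' {y}).encard := by
  classical
  rcases isEmpty_or_nonempty X with hX | hX
  · have h0 : ∀ y : Y, ((⋃ j, K j) ∩ f ⁻¹' {y}).encard = 0 := by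
      intro y
      rw [Set.eq_empty_of_isEmpty ((⋃ j, K j) ∩ f ⁻¹' {y}), Set.encard_empty]
    simp only [h0]
    exact measurable_const
  obtain ⟨u, hu⟩ := TopologicalSpace.exists_dense_seq X
  set I : ℕ → ℕ → ℕ → Set Y := fun j i k =>
    f '' (K j ∩ Metric.closedBall (u i) (1 / (k + 1))) with hI
  have hImeas : ∀ j i k, MeasurableSet (I j i k) := by
    intro j i k
    have hcomp : IsCompact (K j ∩ Metric.closedBall (u i) (1 / (k + 1))) :=
      (hKc j).inter_right Metric.isClosed_closedBall
    exact (hcomp.image_of_continuousOn ((hfc j).mono inter_subset_left)).isClosed.measurableSet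
  set G : ℕ → Set Y := fun n => {y | (n : ℕ∞) ≤ ((⋃ j, K j) ∩ f ⁻¹' {y}).encard} with hG
  have hGeq : ∀ n : ℕ, G n = ⋃ (k : ℕ), ⋃ (s : Finset (ℕ × ℕ)),
      ⋃ (_ : s.card = n ∧ ∀ p ∈ s, ∀ q ∈ s, p ≠ q →
        2 / (k + 1 : ℝ) < dist (u p.2) (u q.2)), ⋂ p ∈ s, I p.1 p.2 k := by
    intro n
    apply subset_antisymm
    · -- hard direction: many preimage points exist, find separated pieces
      intro y hy
      obtain ⟨t, hts, htn⟩ := Set.exists_subset_encard_eq hy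
      have htfin : t.Finite := Set.finite_of_encard_eq_coe htn
      set P : Finset (X × X) :=
        (htfin.toFinset ×ˢ htfin.toFinset).filter (fun p => p.1 ≠ p.2) with hP
      set δ : ℝ := if h : P.Nonempty then P.inf' h (fun p => dist p.1 p.2) else 1 with hδ
      have hδpos : 0 < δ := by
        rw [hδ]
        split_ifs with h
        · rw [Finset.lt_inf'_iff]
          intro p hp
          have hne : p.1 ≠ p.2 := (Finset.mem_filter.1 hp).2
          exact dist_pos.2 hne
        · norm_num
      have hδle : ∀ a ∈ t, ∀ b ∈ t, a ≠ b → δ ≤ dist a b := by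
        intro a ha b hb hab
        have hmem : (a, b) ∈ P := by
          rw [hP, Finset.mem_filter, Finset.mem_product]
          exact ⟨⟨htfin.mem_toFinset.2 ha, htfin.mem_toFinset.2 hb⟩, hab⟩
        rw [hδ, dif_pos ⟨(a, b), hmem⟩]
        exact Finset.inf'_le _ hmem
      obtain ⟨k, hk⟩ := exists_nat_one_div_lt (by positivity : (0:ℝ) < δ / 5)
      have hk5 : 5 / (k + 1 : ℝ) < δ := by
        rw [div_lt_iff₀ (by positivity)] at hk ⊢
        linarith
      have hchoice : ∀ a : X, ∃ ji : ℕ × ℕ, a ∈ t →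
          a ∈ K ji.1 ∧ dist a (u ji.2) < 1 / (k + 1) := by
        intro a
        by_cases ha : a ∈ t
        · obtain ⟨j, hj⟩ := mem_iUnion.1 (hts ha).1
          obtain ⟨i, hi⟩ := hu.exists_dist_lt a (by positivity : (0:ℝ) < 1 / (k + 1))
          exact ⟨(j, i), fun _ => ⟨hj, hi⟩⟩
        · exact ⟨(0, 0), fun h => absurd h ha⟩
      choose ji hji using hchoice
      have hinj : Set.InjOn ji t := by
        intro a ha b hb hab
        by_contra hne
        have h1 := (hji a ha).2
        have h2 := (hji b hb).2
        have h3 : dist a b ≤ dist a (u (ji a).2) + dist (u (ji a).2) b := dist_triangle _ _ _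
        have h4 : dist (u (ji a).2) b = dist b (u (ji b).2) := by rw [hab, dist_comm]
        have h5 : δ ≤ dist a b := hδle a ha b hb hne
        have h6 : (2:ℝ) / (k+1) = 1/(k+1) + 1/(k+1) := by ring
        have h7 : (2:ℝ)/(k+1) ≤ 5/(k+1) := by
          apply div_le_div_of_nonneg_right (by norm_num) (by positivity)
        linarith [h7, hk5]
      set s : Finset (ℕ × ℕ) := htfin.toFinset.image ji with hs
      have hcardt : htfin.toFinset.card = n := by
        have := htfin.encard_eq_coe_toFinset_card
        rw [htn] at this
        exact_mod_cast this.symm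
      have hscard : s.card = n := by
        rw [hs, Finset.card_image_of_injOn (by simpa using hinj), hcardt]
      refine mem_iUnion.2 ⟨k, mem_iUnion.2 ⟨s, mem_iUnion.2 ⟨⟨hscard, ?_⟩, ?_⟩⟩⟩
      · -- separation
        intro p hp q hq hpq
        obtain ⟨a, ha, rfl⟩ := Finset.mem_image.1 hp
        obtain ⟨b, hb, rfl⟩ := Finset.mem_image.1 hq
        rw [htfin.mem_toFinset] at ha hb
        have hab : a ≠ b := fun h => hpq (by rw [h])
        have h5 : δ ≤ dist a b := hδle a ha b hb hab
        have h1 := (hji a ha).2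
        have h2 := (hji b hb).2
        have h3 : dist a b ≤ dist a (u (ji a).2) + dist (u (ji a).2) (u (ji b).2) +
            dist (u (ji b).2) b := dist_triangle4 _ _ _ _
        have h4 : dist (u (ji b).2) b = dist b (u (ji b).2) := dist_comm _ _
        have h7 : (2:ℝ)/(k+1) + 1/(k+1) + 1/(k+1) ≤ 5/(k+1) := by
          rw [← add_div, ← add_div]
          apply div_le_div_of_nonneg_right (by norm_num) (by positivity)
        linarith [hk5]
      · -- membership in the intersection of images
        refine mem_iInter₂.2 fun p hp => ?_
        obtain ⟨a, ha, rfl⟩ := Finset.mem_image.1 hp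
        rw [htfin.mem_toFinset] at ha
        exact ⟨a, ⟨(hji a ha).1, Metric.mem_closedBall.2 (hji a ha).2.le⟩, (hts ha).2⟩
    · -- easy direction: separated pieces give distinct preimage points
      intro y hy
      obtain ⟨k, hk⟩ := mem_iUnion.1 hy
      obtain ⟨s, hs⟩ := mem_iUnion.1 hk
      obtain ⟨⟨hcard, hsep⟩, hy'⟩ := mem_iUnion.1 hs
      have hx : ∀ p : ℕ × ℕ, ∃ x : X, p ∈ s →
          x ∈ K p.1 ∧ x ∈ Metric.closedBall (u p.2) (1 / (k + 1)) ∧ f x = y := by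
        intro p
        by_cases hp : p ∈ s
        · obtain ⟨x, hxmem, hfx⟩ := mem_iInter₂.1 hy' p hp
          exact ⟨x, fun _ => ⟨hxmem.1, hxmem.2, hfx⟩⟩
        · exact ⟨Classical.arbitrary X, fun h => absurd h hp⟩
      choose x hx using hx
      have hinjx : Set.InjOn x ↑s := by
        intro p hp q hq hpq
        by_contra hne
        have h1 := (hx p hp).2.1
        have h2 := (hx q hq).2.1
        have hsep' := hsep p hp q hq hne
        have h3 : dist (u p.2) (u q.2) ≤ dist (u p.2) (x p) + dist (x p) (u q.2) :=
          dist_triangle _ _ _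
        have h4 : dist (u p.2) (x p) = dist (x p) (u p.2) := dist_comm _ _
        have h5 : dist (x p) (u q.2) = dist (x q) (u q.2) := by rw [hpq]
        have h6 : (1:ℝ)/(k+1) + 1/(k+1) = 2/(k+1) := by ring
        have h7 := Metric.mem_closedBall.1 h1
        have h8 := Metric.mem_closedBall.1 h2
        linarith
      have hsub : x '' ↑s ⊆ (⋃ j, K j) ∩ f ⁻¹' {y} := by
        rintro z ⟨p, hp, rfl⟩
        exact ⟨mem_iUnion.2 ⟨p.1, (hx p hp).1⟩, (hx p hp).2.2⟩
      have hcard' : (x '' ↑s).encard = (n : ℕ∞) := by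
        rw [hinjx.encard_image, Set.encard_coe_eq_coe_finsetCard, hcard]
      calc (n : ℕ∞) = (x '' ↑s).encard := hcard'.symm
        _ ≤ ((⋃ j, K j) ∩ f ⁻¹' {y}).encard := Set.encard_mono hsub
  have hGmeas : ∀ n : ℕ, MeasurableSet (G n) := by
    intro n
    rw [hGeq n]
    refine MeasurableSet.iUnion fun k => MeasurableSet.iUnion fun s =>
      MeasurableSet.iUnion fun _ => ?_
    exact s.measurableSet_biInter fun p _ => hImeas p.1 p.2 k
  apply measurable_to_countable'
  intro c
  cases c with
  | top =>
    have : (fun y : Y => ((⋃ j, K j) ∩ f ⁻¹' {y}).encard) ⁻¹' {⊤} = ⋂ n : ℕ, G n := by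
      ext y
      simp only [mem_preimage, mem_singleton_iff, mem_iInter, hG, mem_setOf_eq]
      constructor
      · intro h n; rw [h]; exact le_top
      · intro h
        by_contra hne
        lift ((⋃ j, K j) ∩ f ⁻¹' {y}).encard to ℕ using hne with m hm
        have := h (m + 1)
        have : m + 1 ≤ m := by exact_mod_cast this
        omega
    rw [this]
    exact MeasurableSet.iInter fun n => hGmeas n
  | coe n =>
    have : (fun y : Y => ((⋃ j, K j) ∩ f ⁻¹' {y}).encard) ⁻¹' {(n : ℕ∞)} =
        G n \ G (n + 1) := by
      ext y
      simp only [mem_preimage, mem_singleton_iff, mem_diff, hG, mem_setOf_eq]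
      constructor
      · intro h
        refine ⟨h.symm.le, fun hle => ?_⟩
        rw [h] at hle
        exact absurd (by exact_mod_cast hle) (by omega)
      · rintro ⟨h1, h2⟩
        rcases eq_or_ne (((⋃ j, K j) ∩ f ⁻¹' {y}).encard) ⊤ with h | h
        · exact absurd (h ▸ le_top) h2
        lift ((⋃ j, K j) ∩ f ⁻¹' {y}).encard to ℕ using h with m hm
        have hnm : n ≤ m := by exact_mod_cast h1
        have hmn : ¬ ((n:ℕ) + 1 ≤ m) := fun hc => h2 (by exact_mod_cast hc)
        have : m = n := by omega
        exact_mod_cast congrArg (Nat.cast : ℕ → ℕ∞) this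
    rw [this]
    exact (hGmeas n).diff (hGmeas (n + 1))

end Aux

open Set
open scoped ENNReal NNReal

/-- For a μX-measurable map `f` from a complete separable geometrically
doubling metric space `X` (with a Borel regular measure finite on balls) to a separable
metric measure space `Y`, and a Borel set `A ⊆ X`, the map `f` can be redefined on a
μX-null set so that the Banach indicatrix `y ↦ N(y, g, A)` is measurable with respect to
the completion of `μY`. -/
theorem banachIndicatrix_nullMeasurable_of_ae_redefinition
    {X Y : Type*}
    [MetricSpace X] [CompleteSpace X] [TopologicalSpace.SeparableSpace X]
    [MeasurableSpace X] [BorelSpace X]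
    [MetricSpace Y] [TopologicalSpace.SeparableSpace Y]
    [MeasurableSpace Y] [BorelSpace Y]
    (μX : Measure X) (μY : Measure Y)
    (hdoub : GeometricallyDoubling X)
    (hballs : ∀ (x : X) (r : ℝ), μX (Metric.ball x r) < ⊤)
    (f : X → Y) (hf : MuMeasurableMap μX f)
    (A : Set X) (hA : MeasurableSet A) :
    ∃ g : X → Y, g =ᵐ[μX] f ∧
      NullMeasurable (fun y => banachIndicatrix g A y) μY := by
  classical
  rcases isEmpty_or_nonempty X with hX | hX
  · refine ⟨f, Filter.EventuallyEq.rfl, ?_⟩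
    have h0 : ∀ y, banachIndicatrix f A y = 0 := fun y => by
      rw [banachIndicatrix, Set.eq_empty_of_isEmpty (A ∩ f ⁻¹' {y}), Set.encard_empty]
    simp only [h0]
    exact measurable_const.nullMeasurable
  -- `f` is null measurable, hence a.e. equal to a measurable function `f'`
  have hnm : NullMeasurable f μX := by
    have h : @Measurable (NullMeasurableSpace X μX) Y _
        (MeasurableSpace.generateFrom {t : Set Y | IsOpen t}) f :=
      measurable_generateFrom fun t ht => hf t ht
    intro s hs
    apply h
    rw [BorelSpace.measurable_eq (α := Y)] at hs
    exact hs
  haveI : SecondCountableTopology Y := UniformSpace.secondCountable_of_separable Y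
  have haem : AEMeasurable f μX := hnm.aemeasurable
  set f' : X → Y := haem.mk f with hf'
  have hf'meas : Measurable f' := haem.measurable_mk
  have hff' : f =ᵐ[μX] f' := haem.ae_eq_mk
  obtain ⟨x₀⟩ := hX
  -- σ-compact core of `A` on which `f'` is continuous
  set S : ℕ → Set X := fun n => A ∩ Metric.ball x₀ (n + 1) with hS
  have hSmeas : ∀ n, MeasurableSet (S n) := fun n => hA.inter measurableSet_ball
  have hC : ∀ n m : ℕ, ∃ C : Set X, C ⊆ S n ∧ IsCompact C ∧ ContinuousOn f' C ∧
      (μX.restrict (Metric.ball x₀ (n + 1))) (S n \ C) ≤ (2 : ℝ≥0∞)⁻¹ ^ m := by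
    intro n m
    haveI : IsFiniteMeasure (μX.restrict (Metric.ball x₀ (n + 1))) :=
      ⟨by rw [Measure.restrict_apply_univ]; exact hballs x₀ (n + 1)⟩
    exact aux_lusin _ hf'meas (hSmeas n) (pow_ne_zero m (by norm_num))
  choose C hCS hCcomp hCcont hCμ using hC
  set U : Set X := ⋃ q : ℕ, C (Nat.unpair q).1 (Nat.unpair q).2 with hU
  have hUeq : U = ⋃ (n : ℕ) (m : ℕ), C n m := by
    apply subset_antisymm
    · exact iUnion_subset fun q => subset_iUnion₂ (s := fun n m => C n m) _ _
    · exact iUnion₂_subset fun n m => by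
        have : C n m = C (Nat.unpair (Nat.pair n m)).1 (Nat.unpair (Nat.pair n m)).2 := by
          rw [Nat.unpair_pair]
        rw [this]
        exact subset_iUnion (fun q => C (Nat.unpair q).1 (Nat.unpair q).2) (Nat.pair n m)
  have hUA : U ⊆ A := by
    rw [hUeq]
    exact iUnion₂_subset fun n m => (hCS n m).trans inter_subset_left
  -- the removed set is null
  have hnull : μX (A \ U) = 0 := by
    have hsub : A \ U ⊆ ⋃ n : ℕ, (S n \ U) := by
      intro x ⟨hxA, hxU⟩
      obtain ⟨n, hn⟩ := exists_nat_gt (dist x x₀)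
      exact mem_iUnion.2 ⟨n, ⟨⟨hxA, Metric.mem_ball.2 (hn.trans (by linarith))⟩, hxU⟩⟩
    refine measure_mono_null hsub (measure_iUnion_null fun n => ?_)
    have hbound : ∀ m : ℕ, μX (S n \ U) ≤ (2 : ℝ≥0∞)⁻¹ ^ m := by
      intro m
      have h1 : S n \ U ⊆ S n \ C n m := by
        apply diff_subset_diff_right
        rw [hUeq]
        exact subset_iUnion₂ (s := fun n m => C n m) n m
      have h2 : μX (S n \ C n m) = (μX.restrict (Metric.ball x₀ (n + 1))) (S n \ C n m) := by
        rw [Measure.restrict_apply' measurableSet_ball]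
        congr 1
        apply subset_antisymm (subset_inter Subset.rfl ?_) inter_subset_left
        exact (diff_subset.trans inter_subset_right)
      exact le_trans (measure_mono h1) (h2 ▸ hCμ n m)
    have htend : Filter.Tendsto (fun m : ℕ => (2 : ℝ≥0∞)⁻¹ ^ m) Filter.atTop (nhds 0) :=
      ENNReal.tendsto_pow_atTop_nhds_zero_of_lt_one (by
        rw [ENNReal.inv_lt_one]; exact ENNReal.one_lt_two)
    exact le_antisymm (ge_of_tendsto' htend hbound) zero_le
  -- define `g`
  set y₀ : Y := f' x₀ with hy₀
  set g : X → Y := fun x => if x ∈ A \ U then y₀ else f' x with hg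
  have hgf' : g =ᵐ[μX] f' := by
    refine measure_mono_null ?_ hnull
    intro x hx
    simp only [mem_compl_iff, mem_setOf_eq] at hx
    by_contra hxD
    refine hx ?_
    simp only [hg]
    rw [if_neg hxD]
  refine ⟨g, hgf'.trans hff'.symm, ?_⟩
  -- the indicatrix of `g` agrees off `y₀` with a measurable function
  set K : ℕ → Set X := fun q => C (Nat.unpair q).1 (Nat.unpair q).2 with hK
  have hmeas_h : Measurable fun y : Y => ((⋃ q, K q) ∩ f' ⁻¹' {y}).encard :=
    aux_encard_measurable K (fun q => hCcomp _ _) f' (fun q => hCcont _ _)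
  have hxU : ∀ x ∈ U, g x = f' x := by
    intro x hx
    rw [hg]
    simp only [mem_diff, hx, not_true_eq_false, and_false, if_false]
  have hind : ∀ y : Y, y ≠ y₀ → banachIndicatrix g A y = ((⋃ q, K q) ∩ f' ⁻¹' {y}).encard := by
    intro y hy
    rw [banachIndicatrix]
    congr 1
    have hUK : (⋃ q, K q) = U := rfl
    rw [hUK]
    ext x
    constructor
    · rintro ⟨hxA, hxg⟩
      simp only [mem_preimage, mem_singleton_iff] at hxg
      by_cases hxu : x ∈ U
      · exact ⟨hxu, by rw [mem_preimage, mem_singleton_iff, ← hxU x hxu]; exact hxg⟩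
      · exfalso
        apply hy
        rw [← hxg, hg]
        simp [hxA, hxu]
    · rintro ⟨hxu, hxf⟩
      simp only [mem_preimage, mem_singleton_iff] at hxf
      exact ⟨hUA hxu, by rw [mem_preimage, mem_singleton_iff, hxU x hxu]; exact hxf⟩
  have hfinal : (fun y => banachIndicatrix g A y) = fun y =>
      if y = y₀ then banachIndicatrix g A y₀ else ((⋃ q, K q) ∩ f' ⁻¹' {y}).encard := by
    funext y
    by_cases hy : y = y₀
    · rw [if_pos hy, hy]
    · rw [if_neg hy, hind y hy]
  rw [hfinal]
  exact (Measurable.ite (by simp only [setOf_eq_eq_singleton]; exact measurableSet_singleton y₀)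
    measurable_const hmeas_h).nullMeasurable
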